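/- Let f: ℝⁿ → ℂ be a Schwartz function and λ ∈ ℂ, ρ = n/2. Define the operator 𝔅_j f(ξ) = ξ_j Δf(ξ) − 2(E − λ + ρ)∂_j f(ξ), where E is the Euler operator and Δ the Laplacian. Then ℱ(‖x‖² ∂_j g − 2x_j (E_x + λ + ρ) g)(ξ) = −i 𝔅_j (ℱ g)(ξ) for Schwartz g, where E_x = Σ_k x_k ∂_{x_k}. -/

import Mathlib

open MeasureTheory

/-- The partial derivative `∂_j` on functions `ℝⁿ → ℂ`. -/
noncomputable def pd {n : ℕ} (j : Fin n) (f : (Fin n → ℝ) → ℂ) : (Fin n → ℝ) → ℂ :=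
  fun ξ => fderiv ℝ f ξ (Pi.single j 1)

/-- The Euler operator `E = Σ_k ξ_k ∂_k`. -/
noncomputable def eulerOp {n : ℕ} (f : (Fin n → ℝ) → ℂ) : (Fin n → ℝ) → ℂ :=
  fun ξ => ∑ k, (ξ k : ℂ) * pd k f ξ

/-- The Laplacian `Δ = Σ_k ∂_k²`. -/
noncomputable def lapOp {n : ℕ} (f : (Fin n → ℝ) → ℂ) : (Fin n → ℝ) → ℂ :=
  fun ξ => ∑ k, pd k (pd k f) ξ

/-- The Euclidean Fourier transform `ℱ(f)(ξ) = (2π)^{−n/2} ∫ e^{−i⟨x,ξ⟩} f(x) dx`. -/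
noncomputable def FT {n : ℕ} (f : (Fin n → ℝ) → ℂ) : (Fin n → ℝ) → ℂ :=
  fun ξ => (((2 * Real.pi) ^ (-(n : ℝ) / 2) : ℝ) : ℂ) *
    ∫ x : Fin n → ℝ, Complex.exp (-Complex.I * (∑ k, x k * ξ k : ℝ)) * f x

namespace SchwartzMap

noncomputable def pderivCLM {n : ℕ} (𝕜 : Type) [RCLike 𝕜] (m : Fin n → ℝ) :
    𝓢((Fin n → ℝ), ℂ) →L[ℝ] 𝓢((Fin n → ℝ), ℂ) :=
  LineDeriv.lineDerivOpCLM ℝ 𝓢((Fin n → ℝ), ℂ) m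

theorem pderivCLM_apply {n : ℕ} (𝕜 : Type) [RCLike 𝕜] (m : Fin n → ℝ) (f : 𝓢((Fin n → ℝ), ℂ))
    (x : Fin n → ℝ) : pderivCLM 𝕜 m f x = fderiv ℝ f x m := rfl

end SchwartzMap

namespace FourierAux

open Real Complex SchwartzMap VectorFourier

variable {n : ℕ}

/-- The bilinear form `(2π)⁻¹ ∑ x k * ξ k`. -/
noncomputable def Lb (n : ℕ) : (Fin n → ℝ) →L[ℝ] (Fin n → ℝ) →L[ℝ] ℝ :=
  (2 * Real.pi)⁻¹ • ∑ k : Fin n,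
    (ContinuousLinearMap.proj (R := ℝ) (φ := fun _ : Fin n => ℝ) k).smulRight
      (ContinuousLinearMap.proj (R := ℝ) (φ := fun _ : Fin n => ℝ) k)

lemma Lb_apply (x ξ : Fin n → ℝ) : Lb n x ξ = (2 * Real.pi)⁻¹ * ∑ k, x k * ξ k := by
  simp [Lb, ContinuousLinearMap.sum_apply, Finset.mul_sum, smul_eq_mul]

noncomputable def FTL (f : (Fin n → ℝ) → ℂ) : (Fin n → ℝ) → ℂ :=
  VectorFourier.fourierIntegral Real.fourierChar volume (Lb n).toLinearMap₁₂ f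

noncomputable def Ct (n : ℕ) : ℂ := (((2 * Real.pi) ^ (-(n : ℝ) / 2) : ℝ) : ℂ)

lemma FT_eq (f : (Fin n → ℝ) → ℂ) : FT f = fun ξ => Ct n * FTL f ξ := by
  funext ξ
  unfold FT FTL Ct VectorFourier.fourierIntegral
  congr 1
  refine integral_congr_ae (Filter.Eventually.of_forall fun x => ?_)
  show Complex.exp (-Complex.I * (∑ k, x k * ξ k : ℝ)) * f x
      = Real.fourierChar (-((Lb n).toLinearMap₁₂ x) ξ) • f x
  rw [Circle.smul_def, Real.fourierChar_apply, ContinuousLinearMap.toLinearMap₁₂_apply_apply_apply, Lb_apply]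
  congr 1
  have h2π : (2 * Real.pi) ≠ 0 := by positivity
  have : 2 * Real.pi * -((2 * Real.pi)⁻¹ * ∑ k, x k * ξ k) = -(∑ k, x k * ξ k) := by
    field_simp
  push_cast [this]
  ring


/-- Multiplication by the `k`-th coordinate, as an operator on Schwartz space. -/
noncomputable def mc (k : Fin n) :
    𝓢((Fin n → ℝ), ℂ) →L[ℝ] 𝓢((Fin n → ℝ), ℂ) :=
  SchwartzMap.bilinLeftCLM ((ContinuousLinearMap.lsmul ℝ ℝ (E := ℂ)).flip)
    (ContinuousLinearMap.proj (R := ℝ) (φ := fun _ : Fin n => ℝ) k).hasTemperateGrowth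

lemma mc_apply (k : Fin n) (f : 𝓢((Fin n → ℝ), ℂ)) (x : Fin n → ℝ) :
    mc k f x = (x k : ℂ) * f x := by
  have h : mc k f x = (x k : ℝ) • f x := rfl
  rw [h, Complex.real_smul]

lemma mc_comm (k l : Fin n) (f : 𝓢((Fin n → ℝ), ℂ)) : mc k (mc l f) = mc l (mc k f) := by
  ext x
  simp only [mc_apply]
  ring

lemma integ1 (f : 𝓢((Fin n → ℝ), ℂ)) :
    Integrable (fun x => ‖x‖ * ‖f x‖) (volume : Measure (Fin n → ℝ)) := by
  simpa using f.integrable_pow_mul volume 1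

lemma integ_fderiv (f : 𝓢((Fin n → ℝ), ℂ)) :
    Integrable (fderiv ℝ ⇑f) (volume : Measure (Fin n → ℝ)) := by
  have h : ⇑(SchwartzMap.fderivCLM ℝ (Fin n → ℝ) ℂ f) = fderiv ℝ ⇑f := funext (SchwartzMap.fderivCLM_apply ℝ f)
  rw [← h]
  exact (SchwartzMap.fderivCLM ℝ (Fin n → ℝ) ℂ f).integrable

lemma integ_smulRight (f : 𝓢((Fin n → ℝ), ℂ)) :
    Integrable (fourierSMulRight (Lb n) ⇑f) (volume : Measure (Fin n → ℝ)) := by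
  refine ((integ1 f).const_mul (2 * Real.pi * ‖Lb n‖)).mono'
    f.continuous.aestronglyMeasurable.fourierSMulRight ?_
  filter_upwards with v
  refine (norm_fourierSMulRight_le (Lb n) ⇑f v).trans (le_of_eq ?_)
  ring

lemma FTL_diff (f : 𝓢((Fin n → ℝ), ℂ)) : Differentiable ℝ (FTL ⇑f : (Fin n → ℝ) → ℂ) :=
  VectorFourier.differentiable_fourierIntegral (Lb n) f.integrable (integ1 f)

lemma FT_diff (f : 𝓢((Fin n → ℝ), ℂ)) : Differentiable ℝ (FT ⇑f) := by
  rw [FT_eq]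
  exact (FTL_diff f).const_mul (Ct n)

lemma pd_const_mul (c : ℂ) (F : (Fin n → ℝ) → ℂ) (hF : Differentiable ℝ F) (k : Fin n)
    (ξ : Fin n → ℝ) : pd k (fun ζ => c * F ζ) ξ = c * pd k F ξ := by
  unfold pd
  rw [fderiv_const_mul (hF ξ) c]
  simp


lemma FTL_smul (c : ℂ) (f : 𝓢((Fin n → ℝ), ℂ)) (ξ : Fin n → ℝ) :
    FTL (fun x => c * f x) ξ = c * FTL ⇑f ξ := by
  have h : (fun x => c * f x) = c • ⇑f := by funext x; simp
  rw [h]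
  unfold FTL
  rw [VectorFourier.fourierIntegral_const_smul]
  simp

/-- Lemma A: the derivative of the Fourier transform. -/
lemma pd_FT (f : 𝓢((Fin n → ℝ), ℂ)) (k : Fin n) (ξ : Fin n → ℝ) :
    pd k (FT ⇑f) ξ = -Complex.I * FT ⇑(mc k f) ξ := by
  simp only [FT_eq]
  unfold pd
  rw [fderiv_const_mul (FTL_diff f ξ) (Ct n)]
  have h1 : fderiv ℝ (FTL ⇑f : (Fin n → ℝ) → ℂ) ξ
      = VectorFourier.fourierIntegral Real.fourierChar volume (Lb n).toLinearMap₁₂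
          (fourierSMulRight (Lb n) ⇑f) ξ :=
    congrFun (VectorFourier.fderiv_fourierIntegral (Lb n) f.integrable (integ1 f)) ξ
  rw [ContinuousLinearMap.smul_apply, h1,
    Real.fourierIntegral_continuousLinearMap_apply' (integ_smulRight f)]
  have h2 : (fun x => fourierSMulRight (Lb n) (⇑f) x (Pi.single k 1))
      = fun x => (-Complex.I) * (mc k f x) := by
    funext x
    rw [fourierSMulRight_apply, mc_apply, Lb_apply]
    have : ∑ l, x l * (Pi.single k 1 : Fin n → ℝ) l = x k := by
      simp [Pi.single_apply]
    rw [this, Complex.real_smul]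
    have hπ : (Real.pi : ℂ) ≠ 0 := by exact_mod_cast Real.pi_ne_zero
    push_cast
    field_simp
    ring_nf
    simp [hπ]
  rw [h2]
  have h4 : FTL (fun x => -Complex.I * ((mc k) f x)) ξ = -Complex.I * FTL ⇑(mc k f) ξ :=
    FTL_smul _ _ _
  show Ct n • FTL (fun x => -Complex.I * ((mc k) f x)) ξ
      = -Complex.I * (Ct n * FTL ⇑(mc k f) ξ)
  rw [h4, smul_eq_mul]
  ring

/-- Lemma B: the Fourier transform of the derivative. -/
lemma FT_pd (f : 𝓢((Fin n → ℝ), ℂ)) (m : Fin n) (ξ : Fin n → ℝ) :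
    FT ⇑(SchwartzMap.pderivCLM ℝ (Pi.single m 1) f) ξ = Complex.I * (ξ m : ℂ) * FT ⇑f ξ := by
  rw [FT_eq, FT_eq]
  have h1 : ⇑(SchwartzMap.pderivCLM ℝ (Pi.single m 1) f)
      = fun x => fderiv ℝ (⇑f) x (Pi.single m 1) :=
    funext (SchwartzMap.pderivCLM_apply ℝ (Pi.single m 1) f)
  have h2 : FTL (fun x => fderiv ℝ (⇑f) x (Pi.single m 1)) ξ
      = Complex.I * (ξ m : ℂ) * FTL ⇑f ξ := by
    unfold FTL
    rw [← Real.fourierIntegral_continuousLinearMap_apply' (integ_fderiv f),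
      congrFun (VectorFourier.fourierIntegral_fderiv (Lb n) f.integrable
        f.differentiable (integ_fderiv f)) ξ]
    rw [fourierSMulRight_apply]
    have h3 : (-(Lb n).flip) ξ (Pi.single m 1) = -((2 * Real.pi)⁻¹ * ξ m) := by
      have : (Lb n) (Pi.single m 1) ξ = (2 * Real.pi)⁻¹ * ξ m := by
        rw [Lb_apply]
        congr 1
        simp [Pi.single_apply]
      simp [this]
    rw [h3]
    have h2π : (2 * Real.pi) ≠ 0 := by positivity
    rw [Complex.real_smul]
    have hπ : (Real.pi : ℂ) ≠ 0 := by exact_mod_cast Real.pi_ne_zero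
    push_cast
    field_simp
    ring_nf
    simp [hπ]
  beta_reduce
  rw [h1, h2]
  ring

lemma FT_zero (ξ : Fin n → ℝ) : FT ⇑(0 : 𝓢((Fin n → ℝ), ℂ)) ξ = 0 := by
  simp [FT]

lemma FT_add (u v : 𝓢((Fin n → ℝ), ℂ)) (ξ : Fin n → ℝ) :
    FT ⇑(u + v) ξ = FT ⇑u ξ + FT ⇑v ξ := by
  simp only [FT_eq]
  have h : ⇑(u + v) = ⇑u + ⇑v := rfl
  unfold FTL
  rw [h, VectorFourier.fourierIntegral_add Real.continuous_fourierChar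
    (by apply (Lb n).continuous₂) u.integrable v.integrable]
  simp only [Pi.add_apply]
  ring

lemma FT_smul (c : ℂ) (u : 𝓢((Fin n → ℝ), ℂ)) (ξ : Fin n → ℝ) :
    FT ⇑(c • u) ξ = c * FT ⇑u ξ := by
  simp only [FT_eq]
  have h : ⇑(c • u) = fun x => c * u x := by funext x; simp [SchwartzMap.smul_apply]
  rw [h, FTL_smul]
  ring

lemma FT_sub (u v : 𝓢((Fin n → ℝ), ℂ)) (ξ : Fin n → ℝ) :
    FT ⇑(u - v) ξ = FT ⇑u ξ - FT ⇑v ξ := by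
  have h : u - v = u + (-1 : ℂ) • v := by
    rw [neg_one_smul]; abel
  rw [h, FT_add, FT_smul]
  ring

lemma FT_sum {ι : Type*} (s : Finset ι) (F : ι → 𝓢((Fin n → ℝ), ℂ)) (ξ : Fin n → ℝ) :
    FT ⇑(∑ i ∈ s, F i) ξ = ∑ i ∈ s, FT ⇑(F i) ξ := by
  classical
  induction s using Finset.induction_on with
  | empty => simpa using FT_zero ξ
  | insert _ _ h ih =>
    rw [Finset.sum_insert h, Finset.sum_insert h, FT_add, ih]

lemma coe_sum {ι : Type*} (s : Finset ι) (F : ι → 𝓢((Fin n → ℝ), ℂ)) :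
    ⇑(∑ i ∈ s, F i) = fun x => ∑ i ∈ s, F i x := by
  classical
  funext x
  induction s using Finset.induction_on with
  | empty => simp
  | insert _ _ h ih => rw [Finset.sum_insert h, Finset.sum_insert h, ← ih]; rfl

/-- Product rule for `pd` and `mc`. -/
lemma pd_mc (m l : Fin n) (f : 𝓢((Fin n → ℝ), ℂ)) (x : Fin n → ℝ) :
    pd m ⇑(mc l f) x = (x l : ℂ) * pd m ⇑f x + (if l = m then f x else 0) := by
  unfold pd
  have hcoe : ⇑(mc l f) = fun y => (fun y : Fin n → ℝ => ((y l : ℝ) : ℂ)) y * f y :=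
    funext fun y => mc_apply l f y
  rw [hcoe]
  have hc : DifferentiableAt ℝ (fun y : Fin n → ℝ => ((y l : ℝ) : ℂ)) x :=
    (Complex.ofRealCLM.comp
      (ContinuousLinearMap.proj (R := ℝ) (φ := fun _ : Fin n => ℝ) l)).differentiableAt
  rw [fderiv_fun_mul hc f.differentiableAt]
  have hfd : fderiv ℝ (fun y : Fin n → ℝ => ((y l : ℝ) : ℂ)) x
      = Complex.ofRealCLM.comp
          (ContinuousLinearMap.proj (R := ℝ) (φ := fun _ : Fin n => ℝ) l) :=
    (Complex.ofRealCLM.comp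
      (ContinuousLinearMap.proj (R := ℝ) (φ := fun _ : Fin n => ℝ) l)).fderiv
  rw [ContinuousLinearMap.add_apply, ContinuousLinearMap.smul_apply,
    ContinuousLinearMap.smul_apply, hfd]
  simp only [ContinuousLinearMap.coe_comp', Function.comp_apply,
    ContinuousLinearMap.proj_apply, Complex.ofRealCLM_apply, smul_eq_mul]
  rw [Pi.single_apply]
  split <;> simp <;> ring


lemma sum_apply' {ι : Type*} (s : Finset ι) (F : ι → 𝓢((Fin n → ℝ), ℂ)) (x : Fin n → ℝ) :
    (∑ i ∈ s, F i) x = ∑ i ∈ s, F i x :=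
  congrFun (coe_sum s F) x

lemma pd_sum {ι : Type*} (s : Finset ι) (F : ι → 𝓢((Fin n → ℝ), ℂ)) (m : Fin n)
    (x : Fin n → ℝ) : pd m ⇑(∑ i ∈ s, F i) x = ∑ i ∈ s, pd m ⇑(F i) x := by
  unfold pd
  rw [coe_sum, fderiv_fun_sum (fun i _ => (F i).differentiable x)]
  simp

end FourierAux

open FourierAux SchwartzMap

/-- `ℱ(‖x‖² ∂_j g − 2x_j (E + λ + ρ)g)(ξ) = −i 𝔅_j(ℱg)(ξ)` where
`𝔅_j f = ξ_j Δf − 2(E − λ + ρ)∂_j f` and `ρ = n/2`. -/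
theorem fourier_of_N_action (n : ℕ) (lam : ℂ) (j : Fin n)
    (g : SchwartzMap (Fin n → ℝ) ℂ) (ξ : Fin n → ℝ) :
    FT (fun x => (∑ k, ((x k : ℂ)) ^ 2) * pd j g x
        - 2 * (x j : ℂ) * (eulerOp g x + (lam + (n : ℂ) / 2) * g x)) ξ
      = -Complex.I * ((ξ j : ℂ) * lapOp (FT g) ξ
          - 2 * (eulerOp (pd j (FT g)) ξ + (-lam + (n : ℂ) / 2) * pd j (FT g) ξ)) := by
  classical
  set Q : 𝓢((Fin n → ℝ), ℂ) := ∑ k, mc k (mc k g) with hQdef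
  set S : 𝓢((Fin n → ℝ), ℂ) := ∑ k, pderivCLM ℝ (Pi.single k 1) (mc j (mc k g)) with hSdef
  set H : 𝓢((Fin n → ℝ), ℂ) :=
    pderivCLM ℝ (Pi.single j 1) Q - (2:ℂ) • S + (((n:ℂ) - 2*lam)) • mc j g with hHdef
  -- Step 1: the integrand equals H
  have hint : (fun x => (∑ k, ((x k : ℂ)) ^ 2) * pd j (⇑g) x
      - 2 * (x j : ℂ) * (eulerOp (⇑g) x + (lam + (n : ℂ) / 2) * g x)) = ⇑H := by
    funext x
    have e1 : ∀ k : Fin n, pd j ⇑(mc k (mc k g)) x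
        = (x k:ℂ)^2 * pd j ⇑g x + ((if k = j then (x k : ℂ) * g x else 0)
            + (if k = j then (x k:ℂ) * g x else 0)) := by
      intro k
      rw [pd_mc, pd_mc, mc_apply]
      split <;> ring
    have e2 : ∀ k : Fin n, pd k ⇑(mc j (mc k g)) x
        = (x j:ℂ) * ((x k:ℂ) * pd k ⇑g x) + ((x j:ℂ) * g x
            + (if j = k then (x k:ℂ) * g x else 0)) := by
      intro k
      rw [pd_mc, pd_mc, mc_apply]
      simp only [eq_self_iff_true, if_true]
      split <;> ring
    have hHx : H x = (∑ k, pd j ⇑(mc k (mc k g)) x)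
        - 2 * ∑ k, pd k ⇑(mc j (mc k g)) x + ((n:ℂ)-2*lam) * ((x j:ℂ) * g x) := by
      rw [hHdef]
      simp only [SchwartzMap.add_apply, SchwartzMap.sub_apply, SchwartzMap.smul_apply,
        smul_eq_mul, hQdef, hSdef, sum_apply', SchwartzMap.pderivCLM_apply, mc_apply]
      rw [show fderiv ℝ (⇑(∑ k : Fin n, mc k (mc k g))) x (Pi.single j 1)
          = pd j ⇑(∑ k : Fin n, mc k (mc k g)) x from rfl, pd_sum]
      rfl
    rw [hHx]
    rw [Finset.sum_congr rfl (fun k _ => e1 k), Finset.sum_congr rfl (fun k _ => e2 k)]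
    simp only [Finset.sum_add_distrib, Finset.sum_ite_eq', Finset.mem_univ, if_true,
      Finset.sum_ite_eq, ← Finset.sum_mul, ← Finset.mul_sum, Finset.sum_const,
      Finset.card_univ, Fintype.card_fin, nsmul_eq_mul, eulerOp]
    push_cast
    ring
  rw [hint]
  -- Step 2: expand FT H
  have hsum : FT ⇑S ξ = ∑ k, Complex.I * (ξ k:ℂ) * FT ⇑(mc j (mc k g)) ξ := by
    rw [hSdef, FT_sum]
    exact Finset.sum_congr rfl fun k _ => FT_pd _ k ξ
  have hQF : FT ⇑Q ξ = ∑ k, FT ⇑(mc k (mc k g)) ξ := by rw [hQdef, FT_sum]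
  have hA : FT ⇑H ξ = Complex.I * (ξ j:ℂ) * ∑ k, FT ⇑(mc k (mc k g)) ξ
      - 2 * ∑ k, Complex.I * (ξ k:ℂ) * FT ⇑(mc j (mc k g)) ξ
      + ((n:ℂ) - 2*lam) * FT ⇑(mc j g) ξ := by
    rw [hHdef, FT_add, FT_sub, FT_smul, FT_smul, hsum, FT_pd, hQF]
  rw [hA]
  -- Step 3: the right-hand side
  have hpd2 : ∀ (f : 𝓢((Fin n → ℝ), ℂ)) (k l : Fin n) (ζ : Fin n → ℝ),
      pd k (pd l (FT ⇑f)) ζ = -(FT ⇑(mc k (mc l f)) ζ) := by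
    intro f k l ζ
    rw [show pd l (FT ⇑f) = fun ζ => -Complex.I * FT ⇑(mc l f) ζ from
      funext fun ζ => pd_FT f l ζ]
    rw [pd_const_mul (-Complex.I) _ (FT_diff (mc l f)) k ζ, pd_FT]
    have hI := Complex.I_sq
    ring_nf
    rw [Complex.I_sq]
    ring
  have hlap : lapOp (FT ⇑g) ξ = -∑ k, FT ⇑(mc k (mc k g)) ξ := by
    unfold lapOp
    rw [← Finset.sum_neg_distrib]
    exact Finset.sum_congr rfl fun k _ => hpd2 g k k ξ
  have heuler : eulerOp (pd j (FT ⇑g)) ξ = -∑ k, (ξ k:ℂ) * FT ⇑(mc j (mc k g)) ξ := by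
    unfold eulerOp
    rw [← Finset.sum_neg_distrib]
    refine Finset.sum_congr rfl fun k _ => ?_
    rw [hpd2 g k j ξ, mc_comm]
    ring
  have hpdj : pd j (FT ⇑g) ξ = -Complex.I * FT ⇑(mc j g) ξ := pd_FT g j ξ
  rw [hlap, heuler, hpdj]
  have hpull : ∑ k, Complex.I * (ξ k:ℂ) * FT ⇑(mc j (mc k g)) ξ
      = Complex.I * ∑ k, (ξ k:ℂ) * FT ⇑(mc j (mc k g)) ξ := by
    rw [Finset.mul_sum]
    exact Finset.sum_congr rfl fun k _ => by ring
  rw [hpull]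
  have hI := Complex.I_sq
  ring_nf
  rw [Complex.I_sq]
  ring
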